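/- Let p : [0, τ] → ℝ solve p'(t) = κ(γ_T(δ(t)) − p(t)) with p(0) = p₀. Then for every t ∈ [0, τ], p(t) = p₀ e^{−κt} + G(t) − e^{−κt} G(0). -/

import Mathlib

open Set

/-- The series `G(t) = -∑_{n=1}^∞ (-exp(-δ(t)/T))^n / (nε/(κτT) + 1)` with the linear
downward driving `δ(t) = δmax - (ε/τ) t`. -/
noncomputable def Gfun (T δmax ε κ τ : ℝ) (t : ℝ) : ℝ :=
  -∑' n : ℕ, (-Real.exp (-(δmax - ε / τ * t) / T)) ^ (n + 1) /
      ((n + 1 : ℝ) * ε / (κ * τ * T) + 1)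

lemma summable_aux {r : ℝ} (h0 : 0 ≤ r) (h1 : r < 1) :
    Summable fun n : ℕ => ((n : ℝ) + 1) * r ^ (n + 1) := by
  have h := summable_pow_mul_geometric_of_norm_lt_one (R := ℝ) 1
      (by rwa [Real.norm_eq_abs, abs_of_nonneg h0])
  have h2 := h.comp_injective Nat.succ_injective
  refine h2.congr fun n => ?_
  simp only [Function.comp, Nat.succ_eq_add_one, pow_one]
  push_cast
  ring

lemma term_aux (ε κ τ T y cn : ℝ) (hκ : κ ≠ 0) (hτ : τ ≠ 0) (hT : T ≠ 0) (n : ℕ)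
    (hcn : cn ≠ 0) (hkey : κ * cn * (τ * T) = κ * (τ * T) + ((n : ℝ) + 1) * ε) :
    -((((n : ℝ) + 1) * (ε / (τ * T))) * y / cn) = κ * (-y) + κ * (y / cn) := by
  field_simp
  linear_combination y * hkey

lemma geo_aux (E κ : ℝ) (hE : 0 < E) :
    (κ * -E⁻¹ * -1) * (1 - -E⁻¹)⁻¹ = κ * (1 / (1 + E)) := by
  have hE0 : E ≠ 0 := hE.ne'
  have hne : (1 : ℝ) + E ≠ 0 := by positivity
  have hne2 : (1 : ℝ) + E⁻¹ ≠ 0 := by positivity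
  field_simp
  rw [sub_neg_eq_add, add_comm E 1, mul_div_assoc, div_self hne, mul_one]

lemma Gfun_hasDerivAt (T δmax ε κ τ : ℝ)
    (hT : 0 < T) (hε : 0 < ε) (hτ : 0 < τ) (hκ : 0 < κ)
    (t : ℝ) (hd : 0 < δmax - ε / τ * t) :
    HasDerivAt (Gfun T δmax ε κ τ)
      (κ * (1 / (1 + Real.exp ((δmax - ε / τ * t) / T)) - Gfun T δmax ε κ τ t)) t := by
  set d := δmax - ε / τ * t with hd_def
  set x : ℝ → ℝ := fun u => Real.exp (-(δmax - ε / τ * u) / T) with hx_def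
  set c : ℕ → ℝ := fun n => ((n : ℝ) + 1) * ε / (κ * τ * T) + 1 with hc_def
  set g : ℕ → ℝ → ℝ := fun n u => (-x u) ^ (n + 1) / c n with hg_def
  set g' : ℕ → ℝ → ℝ :=
    fun n u => (((n : ℝ) + 1) * (ε / (τ * T))) * (-x u) ^ (n + 1) / c n with hg'_def
  set U : ℕ → ℝ := fun n => (((n : ℝ) + 1) * (ε / (τ * T))) *
    Real.exp (-(d / 2) / T) ^ (n + 1) with hU_def
  set r : ℝ := Real.exp (-(d / 2) / T) with hr_def
  set b : ℝ := (δmax - d / 2) * τ / ε with hb_def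
  clear_value U r b
  clear_value d
  have hκ0 : κ ≠ 0 := hκ.ne'
  have hτ0 : τ ≠ 0 := hτ.ne'
  have hT0 : T ≠ 0 := hT.ne'
  have hcpos : ∀ n : ℕ, (1 : ℝ) ≤ c n := by
    intro n
    have : 0 ≤ ((n : ℝ) + 1) * ε / (κ * τ * T) := by positivity
    simp only [hc_def]; linarith
  have hcne : ∀ n : ℕ, c n ≠ 0 := fun n => by linarith [hcpos n]
  have hxpos : ∀ u : ℝ, 0 < x u := fun u => Real.exp_pos _
  have hr0 : 0 < r := hr_def ▸ Real.exp_pos _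
  have hr1 : r < 1 := by
    rw [hr_def, Real.exp_lt_one_iff, neg_div]
    have : 0 < d / 2 / T := by positivity
    linarith
  have hεb : ε / τ * b = δmax - d / 2 := by
    rw [hb_def]; field_simp
  have htb : t ∈ Iio b := by
    simp only [mem_Iio]
    have h1 : ε / τ * t < ε / τ * b := by
      rw [hεb]
      have h2 : ε / τ * t = δmax - d := by rw [hd_def]; ring
      linarith
    exact lt_of_mul_lt_mul_left h1 (div_pos hε hτ).le
  have hxb : ∀ u ∈ Iio b, x u ≤ r := by
    intro u hu
    simp only [mem_Iio] at hu
    have h1 : ε / τ * u < δmax - d / 2 := by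
      rw [← hεb]
      exact mul_lt_mul_of_pos_left hu (div_pos hε hτ)
    rw [hx_def, hr_def]
    apply Real.exp_le_exp.mpr
    apply (div_le_div_iff_of_pos_right hT).mpr
    linarith
  -- summable bound
  have hU : Summable U := by
    have h1 := (summable_aux hr0.le hr1).mul_left (ε / (τ * T))
    refine h1.congr fun n => ?_
    rw [hU_def, hr_def]
    ring
  -- term-by-term derivatives
  have hgderiv : ∀ (n : ℕ) (u : ℝ), HasDerivAt (g n) (g' n u) u := by
    intro n u
    have h1 : HasDerivAt (fun u : ℝ => -(δmax - ε / τ * u) / T) (ε / (τ * T)) u := by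
      have h0 : HasDerivAt (fun u : ℝ => δmax - ε / τ * u) (-(ε / τ)) u := by
        simpa using ((hasDerivAt_id u).const_mul (ε / τ)).const_sub δmax
      have h2 := h0.neg.div_const T
      exact h2.congr_deriv (by rw [neg_neg, div_div])
    have h3 : HasDerivAt (fun u => -x u) (-(x u * (ε / (τ * T)))) u := h1.exp.neg
    have h4 := (h3.pow (n + 1)).div_const (c n)
    refine (h4.congr_deriv ?_)
    simp only [hg'_def, Nat.add_sub_cancel]
    push_cast
    ring
  -- uniform bound on derivatives on Iio b
  have hbound : ∀ (n : ℕ), ∀ u ∈ Iio b, ‖g' n u‖ ≤ U n := by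
    intro n u hu
    have hxu := hxpos u
    have hnum : (0 : ℝ) < ((n : ℝ) + 1) * (ε / (τ * T)) := by positivity
    have hcn : (0 : ℝ) < c n := lt_of_lt_of_le one_pos (hcpos n)
    have habs : ‖g' n u‖ = (((n : ℝ) + 1) * (ε / (τ * T))) * (x u) ^ (n + 1) / c n := by
      rw [Real.norm_eq_abs, hg'_def, abs_div, abs_mul, abs_pow, abs_neg,
        abs_of_pos hxu, abs_of_pos hnum, abs_of_pos hcn]
    rw [habs]
    have hUn : U n = (((n : ℝ) + 1) * (ε / (τ * T))) * r ^ (n + 1) := by rw [hU_def]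
    rw [hUn]
    calc (((n : ℝ) + 1) * (ε / (τ * T))) * (x u) ^ (n + 1) / c n
        ≤ (((n : ℝ) + 1) * (ε / (τ * T))) * (x u) ^ (n + 1) :=
          div_le_self (by positivity) (hcpos n)
      _ ≤ (((n : ℝ) + 1) * (ε / (τ * T))) * r ^ (n + 1) := by
          apply mul_le_mul_of_nonneg_left _ hnum.le
          exact pow_le_pow_left₀ hxu.le (hxb u hu) _
  -- summability at t
  have hsum0 : Summable fun n => g n t := by
    apply Summable.of_norm_bounded (g := fun n => r ^ (n + 1))
    · have := (summable_geometric_of_lt_one hr0.le hr1).mul_right r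
      refine this.congr fun n => ?_
      rw [← pow_succ]
    · intro n
      have hxu := hxpos t
      have hcn : (0 : ℝ) < c n := lt_of_lt_of_le one_pos (hcpos n)
      have habs : ‖g n t‖ = (x t) ^ (n + 1) / c n := by
        rw [Real.norm_eq_abs, hg_def, abs_div, abs_pow, abs_neg,
          abs_of_pos hxu, abs_of_pos hcn]
      rw [habs]
      calc (x t) ^ (n + 1) / c n ≤ (x t) ^ (n + 1) :=
            div_le_self (by positivity) (hcpos n)
        _ ≤ r ^ (n + 1) := pow_le_pow_left₀ hxu.le (hxb t htb) _
  -- apply term-by-term differentiation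
  have key : HasDerivAt (fun z => ∑' n, g n z) (∑' n, g' n t) t :=
    hasDerivAt_tsum_of_isPreconnected hU isOpen_Iio isPreconnected_Iio
      (fun n u _ => hgderiv n u) hbound htb hsum0 htb
  have key2 : HasDerivAt (Gfun T δmax ε κ τ) (-∑' n, g' n t) t := key.neg
  -- identify the derivative value
  have hsum' : Summable fun n => g' n t :=
    Summable.of_norm_bounded hU (fun n => hbound n t htb)
  have hXpos : 0 < x t := hxpos t
  have hX1 : x t < 1 := lt_of_le_of_lt (hxb t htb) hr1
  have hnorm : ‖-x t‖ < 1 := by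
    rw [norm_neg, Real.norm_eq_abs, abs_of_pos hXpos]; exact hX1
  have hgeo : Summable fun n : ℕ => κ * (-(-x t) ^ (n + 1)) := by
    have h1 := (summable_geometric_of_norm_lt_one hnorm).mul_left (κ * (-x t) * (-1))
    refine h1.congr fun n => ?_
    rw [pow_succ]
    ring
  have hterm : ∀ n : ℕ, -(g' n t) = κ * (-(-x t) ^ (n + 1)) + κ * g n t := by
    intro n
    have hkey : κ * c n * (τ * T) = κ * (τ * T) + ((n : ℝ) + 1) * ε := by
      show κ * (((n : ℝ) + 1) * ε / (κ * τ * T) + 1) * (τ * T) = _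
      field_simp
      ring
    exact term_aux ε κ τ T ((-x t) ^ (n + 1)) (c n) hκ0 hτ0 hT0 n (hcne n) hkey
  have hA : ∑' n : ℕ, κ * (-(-x t) ^ (n + 1)) = κ * (1 / (1 + Real.exp (d / T))) := by
    have h1 : ∀ n : ℕ, κ * (-(-x t) ^ (n + 1)) = (κ * (-x t) * (-1)) * (-x t) ^ n := by
      intro n; rw [pow_succ]; ring
    rw [tsum_congr h1, tsum_mul_left, tsum_geometric_of_norm_lt_one hnorm]
    have hxt : x t = (Real.exp (d / T))⁻¹ := by
      show Real.exp (-(δmax - ε / τ * t) / T) = (Real.exp (d / T))⁻¹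
      rw [← hd_def, ← Real.exp_neg]
      congr 1
      ring
    rw [hxt]
    exact geo_aux (Real.exp (d / T)) κ (Real.exp_pos _)
  have hfinal : -∑' n, g' n t
      = κ * (1 / (1 + Real.exp (d / T)) - Gfun T δmax ε κ τ t) := by
    have hGt : Gfun T δmax ε κ τ t = -∑' n, g n t := rfl
    rw [← tsum_neg, tsum_congr hterm, Summable.tsum_add hgeo (hsum0.mul_left κ), hA,
      tsum_mul_left, hGt]
    ring
  rw [hfinal] at key2
  exact key2

/-- if `p` solves `p' = κ (γ_T(δ(t)) − p)` with `p 0 = p₀`, where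
`γ_T(δ) = 1/(1 + exp(δ/T))` and `δ(t) = δmax − (ε/τ) t`, `ε = δmax − δmin`, then
`p(t) = p₀ e^{−κt} + G(t) − e^{−κt} G(0)` on `[0, τ]`. -/
theorem stmt2 (T δmin δmax τ κ p₀ : ℝ)
    (hT : 0 < T) (hmin : 0 < δmin) (hlt : δmin < δmax) (hτ : 0 < τ) (hκ : 0 < κ)
    (hp₀ : p₀ ∈ Icc (0 : ℝ) 1)
    (p : ℝ → ℝ) (hp0 : p 0 = p₀)
    (hp : ∀ t ∈ Icc (0 : ℝ) τ,
      HasDerivWithinAt p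
        (κ * (1 / (1 + Real.exp ((δmax - (δmax - δmin) / τ * t) / T)) - p t))
        (Icc 0 τ) t) :
    ∀ t ∈ Icc (0 : ℝ) τ,
      p t = p₀ * Real.exp (-κ * t) + Gfun T δmax (δmax - δmin) κ τ t
        - Real.exp (-κ * t) * Gfun T δmax (δmax - δmin) κ τ 0 := by
  set ε := δmax - δmin with hεdef
  have hε : 0 < ε := sub_pos.2 hlt
  set q : ℝ → ℝ := fun u => p₀ * Real.exp (-κ * u) + Gfun T δmax ε κ τ u
    - Real.exp (-κ * u) * Gfun T δmax ε κ τ 0 with hqdef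
  have hdpos : ∀ s ∈ Icc (0 : ℝ) τ, 0 < δmax - ε / τ * s := by
    intro s hs
    have h1 : ε / τ * s ≤ ε := by
      calc ε / τ * s ≤ ε / τ * τ :=
            mul_le_mul_of_nonneg_left hs.2 (div_pos hε hτ).le
        _ = ε := by field_simp
    have h2 : δmax - ε = δmin := by rw [hεdef]; ring
    linarith
  have hqd : ∀ s ∈ Icc (0 : ℝ) τ,
      HasDerivAt q (κ * (1 / (1 + Real.exp ((δmax - ε / τ * s) / T)) - q s)) s := by
    intro s hs
    have hGd := Gfun_hasDerivAt T δmax ε κ τ hT hε hτ hκ s (hdpos s hs)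
    have hexp : HasDerivAt (fun u : ℝ => Real.exp (-κ * u)) (Real.exp (-κ * s) * (-κ)) s := by
      have h1 : HasDerivAt (fun u : ℝ => -κ * u) (-κ) s := by
        simpa using (hasDerivAt_id s).const_mul (-κ)
      exact h1.exp
    have hcomb := ((hexp.const_mul p₀).add hGd).sub
      (hexp.mul_const (Gfun T δmax ε κ τ 0))
    refine hcomb.congr_deriv ?_
    simp only [hqdef]
    ring
  have hh : ∀ s ∈ Icc (0 : ℝ) τ,
      HasDerivWithinAt (fun u => (p u - q u) * Real.exp (κ * u)) 0 (Icc 0 τ) s := by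
    intro s hs
    have h1 := (hp s hs).sub (hqd s hs).hasDerivWithinAt
    have hexp : HasDerivAt (fun u : ℝ => Real.exp (κ * u)) (Real.exp (κ * s) * κ) s := by
      have h2 : HasDerivAt (fun u : ℝ => κ * u) κ s := by
        simpa using (hasDerivAt_id s).const_mul κ
      exact h2.exp
    have hcomb := h1.mul hexp.hasDerivWithinAt
    refine hcomb.congr_deriv ?_
    simp only [Pi.sub_apply]
    ring
  have hcont : ContinuousOn (fun u => (p u - q u) * Real.exp (κ * u)) (Icc 0 τ) :=
    fun s hs => (hh s hs).continuousWithinAt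
  have hzero := constant_of_has_deriv_right_zero hcont (fun s hs =>
    (hh s (Ico_subset_Icc_self hs)).mono_of_mem_nhdsWithin (Icc_mem_nhdsGE_of_mem hs))
  intro t ht
  have hq0 : q 0 = p₀ := by
    simp only [hqdef]
    simp
  have h3 := hzero t ht
  rw [hp0, hq0, sub_self, zero_mul] at h3
  have hne : Real.exp (κ * t) ≠ 0 := (Real.exp_pos _).ne'
  have h4 : p t - q t = 0 := by
    rcases mul_eq_zero.mp h3 with h | h
    · exact h
    · exact absurd h hne
  show p t = q t
  linarith
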